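/- arXiv:1501.06097 — 2 statements merged into one kernel-verified Lean document; each statement's English description precedes it below -/
import Mathlib

section
/- The map f' : S⁴ → S² ⊂ ℂ × ℝ given by f'(z₁, z₂, x) = (4 z₁ z̄₂ (|z₁|² − |z₂|² − i x √(2 − x²)), 8|z₁|²|z₂|² − 1) is well defined, i.e., for every (z₁, z₂, x) ∈ ℂ² × ℝ with |z₁|² + |z₂|² + x² = 1, the image point satisfies |4 z₁ z̄₂ (|z₁|² − |z₂|² − i x √(2 − x²))|² + (8|z₁|²|z₂|² − 1)² = 1. -/
open Complex

/-- The Matsumoto–Fukaya type map `f'(z₁, z₂, x) =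
`(4 z₁ z̄₂ (|z₁|² − |z₂|² − i x √(2 − x²)), 8|z₁|²|z₂|² − 1)` is well defined from
`S⁴ = {(z₁,z₂,x) : |z₁|² + |z₂|² + x² = 1}` to `S² = {(w,t) : |w|² + t² = 1}`. -/
theorem matsumoto_fukaya_well_defined (z₁ z₂ : ℂ) (x : ℝ)
    (h : ‖z₁‖ ^ 2 + ‖z₂‖ ^ 2 + x ^ 2 = 1) :
    ‖4 * z₁ * (starRingEnd ℂ) z₂ *
        ((‖z₁‖ ^ 2 : ℂ) - (‖z₂‖ ^ 2 : ℂ)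
          - Complex.I * x * Real.sqrt (2 - x ^ 2))‖ ^ 2
      + (8 * ‖z₁‖ ^ 2 * ‖z₂‖ ^ 2 - 1) ^ 2 = 1 := by
  have hx2 : x ^ 2 ≤ 1 := by nlinarith [sq_nonneg ‖z₁‖, sq_nonneg ‖z₂‖]
  have hs : Real.sqrt (2 - x ^ 2) ^ 2 = 2 - x ^ 2 := Real.sq_sqrt (by linarith)
  set a := ‖z₁‖ with ha
  set b := ‖z₂‖ with hb
  have hc : ‖(a ^ 2 : ℂ) - (b ^ 2 : ℂ) - Complex.I * x * Real.sqrt (2 - x ^ 2)‖ ^ 2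
      = (a ^ 2 - b ^ 2) ^ 2 + x ^ 2 * (2 - x ^ 2) := by
    rw [Complex.sq_norm, Complex.normSq_apply]
    simp [← Complex.ofReal_pow]
    nlinarith [hs]
  rw [norm_mul, norm_mul, norm_mul, mul_pow, mul_pow, mul_pow, hc, Complex.norm_conj]
  have h4 : ‖(4 : ℂ)‖ = 4 := by norm_num
  rw [h4, ← ha, ← hb]
  have hX : x ^ 2 = 1 - a ^ 2 - b ^ 2 := by linarith
  rw [hX]; ring
end

section
/- For w, w' ∈ ℂ* with |w| < 1 and |w'| < 1, the complex tori T²_w = ℂ*/⟨z ↦ wz⟩ and T²_{w'} are biholomorphic if and only if w = w'. -/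
open Complex Set

/-- Key lemma: an equivariant holomorphic nonvanishing map on `ℂ*` forces `w' = w ^ n`. -/
lemma key_power (w w' : ℂ) (hw0 : w ≠ 0) (hw'0 : w' ≠ 0) (hw : ‖w‖ < 1)
    (F : ℂ → ℂ) (hF : DifferentiableOn ℂ F {0}ᶜ) (hFne : ∀ z : ℂ, z ≠ 0 → F z ≠ 0)
    (heq : ∀ z : ℂ, z ≠ 0 → F (w * z) = w' * F z) :
    ∃ n : ℤ, w' = w ^ n := by
  have hU : IsOpen ({(0:ℂ)}ᶜ) := isOpen_compl_singleton
  have hFd : ∀ z : ℂ, z ≠ 0 → DifferentiableAt ℂ F z := fun z hz =>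
    hF.differentiableAt (hU.mem_nhds hz)
  -- derivative of F is differentiable on ℂ*
  have hFderiv : ∀ z : ℂ, z ≠ 0 → DifferentiableAt ℂ (deriv F) z := fun z hz =>
    ((hF.analyticOnNhd hU).deriv z hz).differentiableAt
  -- derivative functional equation
  have hd : ∀ z : ℂ, z ≠ 0 → w * deriv F (w * z) = w' * deriv F z := by
    intro z hz
    have hwz : w * z ≠ 0 := mul_ne_zero hw0 hz
    have h1 : HasDerivAt (fun z => F (w * z)) (deriv F (w * z) * w) z := by
      have := ((hFd _ hwz).hasDerivAt).comp z ((hasDerivAt_id z).const_mul w)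
      exact this.congr_deriv (by ring)
    have h2 : HasDerivAt (fun z => w' * F z) (w' * deriv F z) z :=
      ((hFd z hz).hasDerivAt).const_mul w'
    have h3 : HasDerivAt (fun z => F (w * z)) (w' * deriv F z) z := by
      apply h2.congr_of_eventuallyEq
      filter_upwards [hU.mem_nhds hz] with y hy using heq y hy
    have := h1.unique h3
    rw [mul_comm] at this
    exact this
  set φ : ℂ → ℂ := fun z => z * deriv F z / F z with hφdef
  have hφdiff : DifferentiableOn ℂ φ ({(0:ℂ)}ᶜ) := by
    intro z hz
    have hz' : z ≠ 0 := hz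
    exact (((differentiableAt_id.mul (hFderiv z hz')).div (hFd z hz') (hFne z hz'))).differentiableWithinAt
  have hφ : ∀ z : ℂ, z ≠ 0 → φ (w * z) = φ z := by
    intro z hz
    have hwz : w * z ≠ 0 := mul_ne_zero hw0 hz
    have hF' := heq z hz
    have hd' := hd z hz
    show w * z * deriv F (w * z) / F (w * z) = z * deriv F z / F z
    rw [hF']
    have h1 : w * z * deriv F (w * z) = z * (w * deriv F (w * z)) := by ring
    rw [h1, hd']
    rw [show z * (w' * deriv F z) = w' * (z * deriv F z) by ring,
      mul_div_mul_left _ _ hw'0]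
  have hφinv : ∀ z : ℂ, z ≠ 0 → φ (w⁻¹ * z) = φ z := by
    intro z hz
    have h := hφ (w⁻¹ * z) (mul_ne_zero (inv_ne_zero hw0) hz)
    rw [← mul_assoc, mul_inv_cancel₀ hw0, one_mul] at h
    exact h.symm
  have hφn : ∀ (n : ℤ) (z : ℂ), z ≠ 0 → φ (w ^ n * z) = φ z := by
    intro n
    induction n using Int.induction_on with
    | zero => intro z hz; rw [zpow_zero, one_mul]
    | succ n ih =>
        intro z hz
        have : w ^ ((n : ℤ) + 1) * z = w * (w ^ (n : ℤ) * z) := by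
          rw [zpow_add_one₀ hw0]; ring
        rw [this, hφ _ (mul_ne_zero (zpow_ne_zero _ hw0) hz), ih z hz]
    | pred n ih =>
        intro z hz
        have : w ^ (-(n : ℤ) - 1) * z = w⁻¹ * (w ^ (-(n : ℤ)) * z) := by
          rw [zpow_sub_one₀ hw0]; ring
        rw [this, hφinv _ (mul_ne_zero (zpow_ne_zero _ hw0) hz), ih z hz]
  -- reduce to the fundamental annulus
  set r : ℝ := ‖w‖ with hrdef
  have hr0 : 0 < r := norm_pos_iff.mpr hw0
  have hr1 : r < 1 := hw
  have hlogr : Real.log r < 0 := Real.log_neg hr0 hr1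
  have hannulus : ∀ z : ℂ, z ≠ 0 → ∃ n : ℤ, r ≤ ‖w ^ n * z‖ ∧
      ‖w ^ n * z‖ ≤ 1 := by
    intro z hz
    have ha0 : 0 < ‖z‖ := norm_pos_iff.mpr hz
    set L : ℝ := -Real.log r with hLdef
    have hL : 0 < L := by simpa [hLdef] using neg_pos.mpr hlogr
    set n : ℤ := ⌈ Real.log (‖z‖) / L ⌉ with hndef
    refine ⟨n, ?_, ?_⟩
    · -- log r ≤ n log r + log |z|
      have h1 : (n : ℝ) < Real.log (‖z‖) / L + 1 := by
        simpa [hndef] using Int.ceil_lt_add_one (Real.log (‖z‖) / L)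
      have h2 : (n : ℝ) * L < Real.log (‖z‖) + L := by
        have := (mul_lt_mul_of_pos_right h1 hL)
        rwa [add_mul, one_mul, div_mul_cancel₀ _ hL.ne'] at this
      have h3 : Real.log r ≤ (n : ℝ) * Real.log r + Real.log (‖z‖) := by
        have : (n : ℝ) * Real.log r = -((n:ℝ) * L) := by rw [hLdef]; ring
        rw [this]; linarith
      have habs : ‖w ^ n * z‖ = r ^ n * ‖z‖ := by
        rw [norm_mul, norm_zpow]
      rw [habs]
      have hpos : (0:ℝ) < r ^ n * ‖z‖ :=
        mul_pos (zpow_pos hr0 n) ha0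
      rw [← Real.log_le_log_iff hr0 hpos,
        Real.log_mul (by positivity) ha0.ne', Real.log_zpow]
      exact h3
    · have h1 : Real.log (‖z‖) / L ≤ (n : ℝ) := Int.le_ceil _
      have h2 : Real.log (‖z‖) ≤ (n : ℝ) * L := by
        have := mul_le_mul_of_nonneg_right h1 hL.le
        rwa [div_mul_cancel₀ _ hL.ne'] at this
      have h3 : (n : ℝ) * Real.log r + Real.log (‖z‖) ≤ 0 := by
        have : (n : ℝ) * Real.log r = -((n:ℝ) * L) := by rw [hLdef]; ring
        rw [this]; linarith
      have habs : ‖w ^ n * z‖ = r ^ n * ‖z‖ := by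
        rw [norm_mul, norm_zpow]
      rw [habs]
      have hpos : (0:ℝ) < r ^ n * ‖z‖ :=
        mul_pos (zpow_pos hr0 n) ha0
      rw [← Real.log_nonpos_iff hpos.le,
        Real.log_mul (by positivity) ha0.ne', Real.log_zpow]
      exact h3
  -- compact annulus and the maximum
  set A : Set ℂ := (fun z : ℂ => ‖z‖) ⁻¹' Set.Icc r 1 with hAdef
  have hAsub : A ⊆ {(0:ℂ)}ᶜ := by
    intro z hz
    simp only [hAdef, Set.mem_preimage, Set.mem_Icc] at hz
    intro h0
    rw [Set.mem_singleton_iff] at h0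
    rw [h0] at hz
    have : r ≤ 0 := by simpa using hz.1
    linarith
  have hAcompact : IsCompact A := by
    apply (isCompact_closedBall (0:ℂ) 1).of_isClosed_subset
    · exact (isClosed_Icc).preimage continuous_norm
    · intro z hz
      simp only [hAdef, Set.mem_preimage, Set.mem_Icc] at hz
      simpa [Metric.mem_closedBall, Complex.dist_eq] using hz.2
  have hAne : A.Nonempty := ⟨1, by simp only [hAdef, Set.mem_preimage, Set.mem_Icc, norm_one]; exact ⟨hr1.le, le_rfl⟩⟩
  obtain ⟨z₀, hz₀A, hmaxA⟩ := hAcompact.exists_isMaxOn hAne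
    ((hφdiff.continuousOn.mono hAsub).norm)
  have hz₀ : z₀ ≠ 0 := hAsub hz₀A
  have hmaxU : IsMaxOn (norm ∘ φ) ({(0:ℂ)}ᶜ) z₀ := by
    intro z hz
    have hz' : z ≠ 0 := hz
    obtain ⟨n, hn1, hn2⟩ := hannulus z hz'
    have hmem : w ^ n * z ∈ A := by
      simp only [hAdef, Set.mem_preimage, Set.mem_Icc]; exact ⟨hn1, hn2⟩
    have := hmaxA hmem
    simpa [Function.comp, hφn n z hz'] using this
  have hconn : IsPreconnected ({(0:ℂ)}ᶜ : Set ℂ) := by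
    exact (isConnected_compl_singleton_of_one_lt_rank
      (rank_real_complex ▸ Nat.one_lt_ofNat) (0:ℂ)).isPreconnected
  have hconst := Complex.eqOn_of_isPreconnected_of_isMaxOn_norm hconn hU hφdiff (hAsub hz₀A) hmaxU
  set k : ℂ := φ z₀ with hkdef
  have hφk : ∀ z : ℂ, z ≠ 0 → z * deriv F z = k * F z := by
    intro z hz
    have := hconst (Set.mem_compl_singleton_iff.mpr hz)
    simp only [Function.const] at this
    have h : φ z = k := this
    rw [hφdef] at h
    field_simp [hFne z hz] at h
    rw [h, mul_comm]
  -- F (exp t) = F 1 * exp (k t)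
  have hexp : ∀ t : ℂ, F (Complex.exp t) = F 1 * Complex.exp (k * t) := by
    have hg : ∀ t : ℂ, HasDerivAt (fun t => F (Complex.exp t) * Complex.exp (-(k * t))) 0 t := by
      intro t
      have he : Complex.exp t ≠ 0 := Complex.exp_ne_zero t
      have h1 : HasDerivAt (fun t => F (Complex.exp t))
          (deriv F (Complex.exp t) * Complex.exp t) t :=
        ((hFd _ he).hasDerivAt).comp t (Complex.hasDerivAt_exp t)
      have h2 : HasDerivAt (fun t : ℂ => Complex.exp (-(k * t)))
          (Complex.exp (-(k * t)) * -k) t := by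
        have h3 : HasDerivAt (fun t : ℂ => -(k * t)) (-k) t := by
          exact ((hasDerivAt_id t).const_mul k).neg.congr_deriv (by ring)
        exact (Complex.hasDerivAt_exp (-(k*t))).comp t h3
      have := h1.mul h2
      refine this.congr_deriv (Eq.symm ?_)
      have hk' := hφk (Complex.exp t) he
      have : Complex.exp t * deriv F (Complex.exp t) = k * F (Complex.exp t) := hk'
      calc (0:ℂ) = (Complex.exp t * deriv F (Complex.exp t) - k * F (Complex.exp t))
            * Complex.exp (-(k * t)) := by rw [this]; ring
        _ = deriv F (Complex.exp t) * Complex.exp t * Complex.exp (-(k * t)) +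
            F (Complex.exp t) * (Complex.exp (-(k * t)) * -k) := by ring
    have hgdiff : Differentiable ℂ (fun t => F (Complex.exp t) * Complex.exp (-(k * t))) :=
      fun t => (hg t).differentiableAt
    have hgderiv : ∀ t, deriv (fun t => F (Complex.exp t) * Complex.exp (-(k * t))) t = 0 :=
      fun t => (hg t).deriv
    intro t
    have := is_const_of_deriv_eq_zero hgdiff hgderiv t 0
    simp only [Complex.exp_zero, mul_zero, neg_zero, mul_one] at this
    have he := Complex.exp_ne_zero (-(k * t))
    field_simp [Complex.exp_neg] at this ⊢
    rw [← this, Complex.exp_neg, mul_assoc, inv_mul_cancel₀ (Complex.exp_ne_zero _), mul_one]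
  -- k is an integer
  have h1ne : F 1 ≠ 0 := hFne 1 one_ne_zero
  obtain ⟨n, hn⟩ : ∃ n : ℤ, k * (2 * Real.pi * Complex.I) = n * (2 * Real.pi * Complex.I) := by
    rw [← Complex.exp_eq_one_iff]
    have h1 := hexp (2 * Real.pi * Complex.I)
    rw [Complex.exp_two_pi_mul_I] at h1
    have : F 1 * Complex.exp (k * (2 * Real.pi * Complex.I)) = F 1 * 1 := by
      rw [mul_one, ← h1]
    exact mul_left_cancel₀ h1ne this
  have hkn : k = (n : ℂ) := by
    have h2pi : (2 * (Real.pi:ℂ) * Complex.I) ≠ 0 := by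
      simp [Real.pi_ne_zero, Complex.I_ne_zero]
    exact mul_right_cancel₀ h2pi hn
  -- conclude
  refine ⟨n, ?_⟩
  have hw1 : F w = w' * F 1 := by simpa using heq 1 one_ne_zero
  have hw2 : F w = F 1 * Complex.exp (k * Complex.log w) := by
    rw [← hexp (Complex.log w), Complex.exp_log hw0]
  rw [hw2, hkn, Complex.exp_int_mul, Complex.exp_log hw0, mul_comm] at hw1
  exact (mul_right_cancel₀ h1ne hw1).symm

/-- A biholomorphism between the tori `T²_w = ℂ*/⟨z ↦ wz⟩` and `T²_{w'} = ℂ*/⟨z ↦ w'z⟩`,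
represented by its equivariant lift to the intermediate covering `ℂ*`: a holomorphic,
nonvanishing `F : ℂ* → ℂ*` with `F(wz) = w'·F(z)` together with a holomorphic equivariant
inverse up to deck transformations. -/
def ToriBiholo (w w' : ℂ) : Prop :=
  ∃ F G : ℂ → ℂ,
    DifferentiableOn ℂ F {0}ᶜ ∧ (∀ z : ℂ, z ≠ 0 → F z ≠ 0) ∧
    (∀ z : ℂ, z ≠ 0 → F (w * z) = w' * F z) ∧
    DifferentiableOn ℂ G {0}ᶜ ∧ (∀ z : ℂ, z ≠ 0 → G z ≠ 0) ∧
    (∀ z : ℂ, z ≠ 0 → G (w' * z) = w * G z) ∧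
    (∀ z : ℂ, z ≠ 0 → ∃ n : ℤ, G (F z) = w ^ n * z) ∧
    (∀ z : ℂ, z ≠ 0 → ∃ n : ℤ, F (G z) = w' ^ n * z)

lemma zpow_pos_exponent (r : ℝ) (h0 : 0 < r) (h1 : r < 1) {n : ℤ} (h : r ^ n < 1) : 0 < n := by
  rw [← Real.rpow_intCast] at h
  have h' : r ^ (n : ℝ) < r ^ (0 : ℝ) := by simpa [Real.rpow_zero] using h
  have := (Real.rpow_lt_rpow_left_iff_of_base_lt_one h0 h1).mp h'
  exact_mod_cast this

/-- For `w, w' ∈ ℂ*` with `|w| < 1`, `|w'| < 1`, the complex tori `T²_w` and `T²_{w'}`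
are biholomorphic if and only if `w = w'`. -/
theorem tori_biholo_iff (w w' : ℂ) (hw0 : w ≠ 0) (hw'0 : w' ≠ 0)
    (hw : ‖w‖ < 1) (hw' : ‖w'‖ < 1) :
    ToriBiholo w w' ↔ w = w' := by
  constructor
  · rintro ⟨F, G, hF, hFne, hFeq, hG, hGne, hGeq, -, -⟩
    obtain ⟨n, hn⟩ := key_power w w' hw0 hw'0 hw F hF hFne hFeq
    obtain ⟨m, hm⟩ := key_power w' w hw'0 hw0 hw' G hG hGne hGeq
    set r : ℝ := ‖w‖ with hrdef
    set r' : ℝ := ‖w'‖ with hrdef'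
    have hr0 : 0 < r := norm_pos_iff.mpr hw0
    have hr0' : 0 < r' := norm_pos_iff.mpr hw'0
    have habsn : r' = r ^ n := by rw [hrdef', hn, norm_zpow]
    have habsm : r = r' ^ m := by rw [hrdef, hm, norm_zpow]
    have hnpos : 0 < n := zpow_pos_exponent r hr0 hw (habsn ▸ hw')
    have hmpos : 0 < m := zpow_pos_exponent r' hr0' hw' (habsm ▸ hw)
    have hlog : Real.log r = (m : ℝ) * ((n : ℝ) * Real.log r) := by
      calc Real.log r = Real.log (r' ^ m) := by rw [← habsm]
        _ = (m : ℝ) * Real.log r' := Real.log_zpow _ _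
        _ = (m : ℝ) * Real.log (r ^ n) := by rw [← habsn]
        _ = (m : ℝ) * ((n : ℝ) * Real.log r) := by rw [Real.log_zpow]
    have hlogne : Real.log r ≠ 0 := (Real.log_neg hr0 hw).ne
    have hmn : (m : ℝ) * (n : ℝ) = 1 := by
      have h : ((m : ℝ) * (n : ℝ) - 1) * Real.log r = 0 := by linarith [hlog]
      rcases mul_eq_zero.mp h with h' | h'
      · linarith
      · exact absurd h' hlogne
    have hmnZ : m * n = 1 := by exact_mod_cast hmn
    have hn1 : n = 1 := by nlinarith
    rw [hn, hn1, zpow_one]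
  · rintro rfl
    exact ⟨id, id, differentiable_id.differentiableOn, fun z hz => hz, fun z _ => rfl,
      differentiable_id.differentiableOn, fun z hz => hz, fun z _ => rfl,
      fun z _ => ⟨0, by simp⟩, fun z _ => ⟨0, by simp⟩⟩
end
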